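/- arXiv:2009.13391 — 3 statements merged into one kernel-verified Lean document; each statement's English description precedes it below -/
import Mathlib

section
/- Let X be a normed linear space, Y a Banach space, and T : X → Y a bounded linear map. Suppose that for every ε > 0 there exist a Banach space Z_ε and a compact linear map K_ε : X → Z_ε such that ‖Tx‖_Y ≤ ε‖x‖_X + ‖K_ε x‖_{Z_ε} for all x ∈ X. Then T is compact. -/
/-- Compactness estimates (with ε-dependent auxiliary Banach spaces and compact maps)
imply compactness of a bounded linear operator. -/
theorem compact_of_compactness_estimates
    {X Y : Type*} [NormedAddCommGroup X] [NormedSpace ℝ X]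
    [NormedAddCommGroup Y] [NormedSpace ℝ Y] [CompleteSpace Y]
    (T : X →L[ℝ] Y)
    (h : ∀ ε : ℝ, 0 < ε →
      ∃ (Z : Type) (_ : NormedAddCommGroup Z) (_ : NormedSpace ℝ Z) (_ : CompleteSpace Z)
        (K : X →L[ℝ] Z), IsCompactOperator K ∧
          ∀ x : X, ‖T x‖ ≤ ε * ‖x‖ + ‖K x‖) :
    IsCompactOperator T := by
  have key : TotallyBounded (⇑T '' Metric.ball 0 1) := by
    rw [Metric.totallyBounded_iff]
    intro ε hε
    obtain ⟨Z, _, _, _, K, hK, hest⟩ := h (ε / 3) (by linarith)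
    obtain ⟨C, hC, hsub⟩ := hK.image_ball_subset_compact (f := (K : X →ₗ[ℝ] Z)) 1
    have htb : TotallyBounded (⇑K '' Metric.ball 0 1) := hC.totallyBounded.subset hsub
    obtain ⟨t, hts, htf, hcov⟩ := Metric.finite_approx_of_totallyBounded htb (ε / 3)
      (by linarith)
    choose f hfball hfK using fun z (hz : z ∈ t) => hts hz
    have : Finite ↥t := htf
    refine ⟨Set.range (fun p : t => T (f p.1 p.2)), Set.finite_range _, ?_⟩
    rintro y ⟨x, hx, rfl⟩
    have hKx := hcov ⟨x, hx, rfl⟩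
    simp only [Set.mem_iUnion] at hKx
    obtain ⟨z, hz, hdz⟩ := hKx
    refine Set.mem_iUnion₂.2 ⟨T (f z hz), ⟨⟨z, hz⟩, rfl⟩, ?_⟩
    rw [Metric.mem_ball, dist_eq_norm, ← map_sub]
    have hx' : ‖x‖ < 1 := by simpa using hx
    have hf' : ‖f z hz‖ < 1 := by simpa using hfball z hz
    have h1 : ‖x - f z hz‖ < 2 := by
      calc ‖x - f z hz‖ ≤ ‖x‖ + ‖f z hz‖ := norm_sub_le _ _
        _ < 2 := by linarith
    have h2 : ‖K (x - f z hz)‖ < ε / 3 := by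
      rw [map_sub, hfK z hz, ← dist_eq_norm]
      simpa [dist_eq_norm] using hdz
    calc ‖T (x - f z hz)‖ ≤ ε / 3 * ‖x - f z hz‖ + ‖K (x - f z hz)‖ := hest _
      _ < ε / 3 * 2 + ε / 3 := by
          have := mul_lt_mul_of_pos_left h1 (show (0:ℝ) < ε / 3 by linarith)
          linarith
      _ ≤ ε := by linarith
  have : IsCompact (closure (⇑T '' Metric.ball 0 1)) :=
    TotallyBounded.isCompact_of_isClosed key.closure isClosed_closure
  exact (isCompactOperator_iff_isCompact_closure_image_ball (f := (T : X →ₗ[ℝ] Y))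
    one_pos).mpr this
end

section
/- Let φ(z) = exp(−1/(1−|z|)) on the unit disc 𝔻. For real s ≥ 0, as t → ∞, ∫_𝔻 |z|^t (1−|z|²)^{2s} φ(z) dA(z) ∼ (t+1)^{(−4s−3)/4} exp(−2√(t+1)), i.e. the ratio of the two sides tends to a positive constant. -/
open MeasureTheory Real Filter Set Topology

noncomputable section WIA
namespace WIA

noncomputable def K (s σ w : ℝ) : ℝ :=
  Set.indicator (Set.Ioo (-σ) (σ ^ 3 - σ))
    (fun w => (1 - (σ + w) / σ ^ 3) ^ (σ ^ 4 : ℝ) *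
      (((σ + w) / σ ^ 3 * (2 - (σ + w) / σ ^ 3)) ^ 2 * σ ^ 4) ^ s *
      Real.exp (2 * σ ^ 2 - σ ^ 3 / (σ + w))) w

noncomputable def bound (s w : ℝ) : ℝ :=
  4 ^ s * ((1 + |w|) ^ (2 * s) * Real.exp (-(w ^ 2 / 2)) + Real.exp (-(2 * |w|)))

lemma key_ident {σ w : ℝ} (hσ : σ ≠ 0) (hsw : σ + w ≠ 0) :
    σ ^ 4 * ((σ + w) / σ ^ 3) + σ ^ 3 / (σ + w) - 2 * σ ^ 2 = σ * w ^ 2 / (σ + w) := by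
  field_simp
  ring

lemma K_meas (s σ : ℝ) : AEStronglyMeasurable (K s σ) volume := by
  refine (Measurable.indicator ?_ measurableSet_Ioo).aestronglyMeasurable
  fun_prop

lemma bound_nonneg (s w : ℝ) : 0 ≤ bound s w := by
  unfold bound; positivity

lemma limit_integral (s : ℝ) :
    ∫ w : ℝ, 4 ^ s * Real.exp (-(1/2) - w ^ 2) = 4 ^ s * Real.exp (-(1/2)) * Real.sqrt π := by
  have : ∀ w : ℝ, 4 ^ s * Real.exp (-(1/2) - w ^ 2)
      = (4 ^ s * Real.exp (-(1/2))) * Real.exp (-1 * w ^ 2) := by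
    intro w
    rw [show -(1/2) - w^2 = (-(1/2)) + (-1 * w^2) by ring, Real.exp_add]
    ring
  simp_rw [this]
  rw [MeasureTheory.integral_const_mul, integral_gaussian, div_one]

set_option maxHeartbeats 1000000 in
lemma K_bound {s : ℝ} (hs : 0 ≤ s) {σ : ℝ} (hσ : 4 * s + 4 ≤ σ) (w : ℝ) :
    ‖K s σ w‖ ≤ bound s w := by
  have hσ1 : (1:ℝ) ≤ σ := by linarith
  have hσ0 : (0:ℝ) < σ := by linarith
  unfold K
  rcases em (w ∈ Set.Ioo (-σ) (σ ^ 3 - σ)) with hw | hw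
  swap
  · rw [Set.indicator_of_notMem hw, norm_zero]; exact bound_nonneg s w
  rw [Set.indicator_of_mem hw]
  obtain ⟨hw1, hw2⟩ := hw
  have hsw : 0 < σ + w := by linarith
  set u : ℝ := (σ + w) / σ ^ 3 with hu
  have hu0 : 0 < u := by positivity
  have hu1 : u < 1 := by
    rw [hu, div_lt_one (by positivity)]; linarith
  -- nonnegativity of the three factors
  have hP0 : (0:ℝ) ≤ (u * (2 - u)) ^ 2 * σ ^ 4 := by positivity
  have h1u : (0:ℝ) < 1 - u := by linarith
  -- first factor bound
  have hf1 : (1 - u) ^ (σ ^ 4 : ℝ) ≤ Real.exp (-(σ ^ 4 * u)) := by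
    rw [← Real.exp_log h1u, ← Real.exp_mul]
    apply Real.exp_le_exp.2
    have hlog : Real.log (1 - u) ≤ -u := by
      have := Real.log_le_sub_one_of_pos h1u; linarith
    nlinarith [pow_pos hσ0 4, mul_le_mul_of_nonneg_right hlog (pow_pos hσ0 4).le]
  -- middle factor bound
  have hmidle : (u * (2 - u)) ^ 2 * σ ^ 4 ≤ 4 * (1 + |w|) ^ 2 := by
    have hx : u * σ ^ 2 = (σ + w) / σ := by
      rw [hu]; field_simp
    have hxle : (σ + w) / σ ≤ 1 + |w| := by
      rw [div_le_iff₀ hσ0]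
      have : w ≤ |w| := le_abs_self w
      nlinarith [abs_nonneg w]
    have h2u : 0 < 2 - u := by linarith
    have : (u * (2 - u)) ^ 2 * σ ^ 4 = (u * σ ^ 2) ^ 2 * (2 - u) ^ 2 := by ring
    rw [this, hx]
    have hA : ((σ + w) / σ) ^ 2 ≤ (1 + |w|) ^ 2 := by
      apply sq_le_sq' <;> nlinarith [abs_nonneg w, div_pos hsw hσ0]
    have hB : (2 - u) ^ 2 ≤ 4 := by nlinarith
    nlinarith [sq_nonneg ((σ+w)/σ), sq_nonneg (2-u), abs_nonneg w]
  have hmid : ((u * (2 - u)) ^ 2 * σ ^ 4) ^ s ≤ 4 ^ s * (1 + |w|) ^ (2 * s) := by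
    calc ((u * (2 - u)) ^ 2 * σ ^ 4) ^ s ≤ (4 * (1 + |w|) ^ 2) ^ s :=
          Real.rpow_le_rpow hP0 hmidle hs
      _ = 4 ^ s * (1 + |w|) ^ (2 * s) := by
          rw [Real.mul_rpow (by norm_num) (by positivity)]
          congr 1
          rw [← Real.rpow_natCast (1 + |w|) 2, ← Real.rpow_mul (by positivity)]
          norm_num [mul_comm]
  -- exponential factor: combine with hf1
  have hexp : (1 - u) ^ (σ ^ 4 : ℝ) * Real.exp (2 * σ ^ 2 - σ ^ 3 / (σ + w))
      ≤ Real.exp (-(σ * w ^ 2 / (σ + w))) := by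
    calc (1 - u) ^ (σ ^ 4 : ℝ) * Real.exp (2 * σ ^ 2 - σ ^ 3 / (σ + w))
        ≤ Real.exp (-(σ ^ 4 * u)) * Real.exp (2 * σ ^ 2 - σ ^ 3 / (σ + w)) :=
          mul_le_mul_of_nonneg_right hf1 (Real.exp_pos _).le
      _ = Real.exp (-(σ ^ 4 * u + σ ^ 3 / (σ + w) - 2 * σ ^ 2)) := by
          rw [← Real.exp_add]; ring_nf
      _ = Real.exp (-(σ * w ^ 2 / (σ + w))) := by rw [key_ident hσ0.ne' hsw.ne']
  -- nonneg of everything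
  have hK0 : (0:ℝ) ≤ (1 - u) ^ (σ ^ 4 : ℝ) * ((u * (2 - u)) ^ 2 * σ ^ 4) ^ s *
      Real.exp (2 * σ ^ 2 - σ ^ 3 / (σ + w)) := by positivity
  rw [Real.norm_eq_abs, abs_of_nonneg hK0]
  have hchain : (1 - u) ^ (σ ^ 4 : ℝ) * ((u * (2 - u)) ^ 2 * σ ^ 4) ^ s *
      Real.exp (2 * σ ^ 2 - σ ^ 3 / (σ + w))
      ≤ (4 ^ s * (1 + |w|) ^ (2 * s)) * Real.exp (-(σ * w ^ 2 / (σ + w))) := by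
    have h1 : (0:ℝ) ≤ (1 - u) ^ (σ ^ 4 : ℝ) := Real.rpow_nonneg h1u.le _
    calc (1 - u) ^ (σ ^ 4 : ℝ) * ((u * (2 - u)) ^ 2 * σ ^ 4) ^ s *
        Real.exp (2 * σ ^ 2 - σ ^ 3 / (σ + w))
        ≤ (1 - u) ^ (σ ^ 4 : ℝ) * (4 ^ s * (1 + |w|) ^ (2 * s)) *
          Real.exp (2 * σ ^ 2 - σ ^ 3 / (σ + w)) := by
          apply mul_le_mul_of_nonneg_right _ (Real.exp_pos _).le
          exact mul_le_mul_of_nonneg_left hmid h1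
      _ = (4 ^ s * (1 + |w|) ^ (2 * s)) *
          ((1 - u) ^ (σ ^ 4 : ℝ) * Real.exp (2 * σ ^ 2 - σ ^ 3 / (σ + w))) := by ring
      _ ≤ (4 ^ s * (1 + |w|) ^ (2 * s)) * Real.exp (-(σ * w ^ 2 / (σ + w))) := by
          apply mul_le_mul_of_nonneg_left hexp (by positivity)
  refine hchain.trans ?_
  unfold bound
  rcases le_or_gt w σ with hcase | hcase
  · -- w ≤ σ : Gaussian regime
    have hdiv : w ^ 2 / 2 ≤ σ * w ^ 2 / (σ + w) := by
      rw [div_le_div_iff₀ (by norm_num) hsw]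
      nlinarith [sq_nonneg w]
    have : Real.exp (-(σ * w ^ 2 / (σ + w))) ≤ Real.exp (-(w ^ 2 / 2)) :=
      Real.exp_le_exp.2 (by linarith)
    have h2 : (0:ℝ) ≤ 4 ^ s * (1 + |w|) ^ (2 * s) := by positivity
    calc (4 ^ s * (1 + |w|) ^ (2 * s)) * Real.exp (-(σ * w ^ 2 / (σ + w)))
        ≤ (4 ^ s * (1 + |w|) ^ (2 * s)) * Real.exp (-(w ^ 2 / 2)) :=
          mul_le_mul_of_nonneg_left this h2
      _ ≤ 4 ^ s * ((1 + |w|) ^ (2 * s) * Real.exp (-(w ^ 2 / 2)) + Real.exp (-(2 * |w|))) := by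
          rw [mul_add, ← mul_assoc]
          exact le_add_of_nonneg_right (by positivity)
  · -- σ < w : exponential regime
    have hw0 : 0 < w := lt_of_lt_of_le hσ0 hcase.le
    have habs : |w| = w := abs_of_pos hw0
    have hdiv : (2 * s + 2) * w ≤ σ * w ^ 2 / (σ + w) := by
      rw [le_div_iff₀ hsw]
      have h1 : (2*s+2)*σ ≤ (2*s+2)*w :=
        mul_le_mul_of_nonneg_left hcase.le (by linarith)
      have h2 : (4*s+4)*w ≤ σ*w := mul_le_mul_of_nonneg_right hσ hw0.le
      have h3 : (2*s+2)*(σ+w) ≤ σ*w := by linarith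
      have h4 := mul_le_mul_of_nonneg_right h3 hw0.le
      calc (2*s+2)*w*(σ+w) = (2*s+2)*(σ+w)*w := by ring
        _ ≤ σ*w*w := h4
        _ = σ*w^2 := by ring
    have hpow : (1 + |w|) ^ (2 * s) ≤ Real.exp (2 * s * w) := by
      rw [habs, ← Real.exp_log (show (0:ℝ) < 1 + w by linarith), ← Real.exp_mul]
      apply Real.exp_le_exp.2
      have hlog : Real.log (1 + w) ≤ w := by
        have := Real.log_le_sub_one_of_pos (show (0:ℝ) < 1 + w by linarith); linarith
      calc Real.log (1+w) * (2*s) = (2*s) * Real.log (1+w) := by ring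
        _ ≤ (2*s) * w := mul_le_mul_of_nonneg_left hlog (by linarith)
        _ = 2*s*w := by ring
    have h4s : (0:ℝ) ≤ (4:ℝ) ^ s := Real.rpow_nonneg (by norm_num) s
    calc (4 ^ s * (1 + |w|) ^ (2 * s)) * Real.exp (-(σ * w ^ 2 / (σ + w)))
        ≤ (4 ^ s * Real.exp (2 * s * w)) * Real.exp (-((2 * s + 2) * w)) := by
          apply mul_le_mul
          · exact mul_le_mul_of_nonneg_left hpow h4s
          · exact Real.exp_le_exp.2 (by linarith)
          · exact (Real.exp_pos _).le
          · positivity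
      _ = 4 ^ s * Real.exp (-(2 * |w|)) := by
          rw [mul_assoc, ← Real.exp_add, habs]; ring_nf
      _ ≤ 4 ^ s * ((1 + |w|) ^ (2 * s) * Real.exp (-(w ^ 2 / 2)) + Real.exp (-(2 * |w|))) := by
          rw [mul_add]
          exact le_add_of_nonneg_left (by positivity)

lemma bound_integrable {s : ℝ} (hs : 0 ≤ s) : Integrable (bound s) := by
  unfold bound
  refine Integrable.const_mul (Integrable.add ?_ ?_) _
  · refine Integrable.mono' ((integrable_exp_neg_mul_sq (by norm_num : (0:ℝ) < 1/4)).const_mul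
      (Real.exp (4 * s ^ 2))) ?_ (ae_of_all _ fun w => ?_)
    · apply Continuous.aestronglyMeasurable
      have h1 : Continuous fun w : ℝ => (1 + |w|) ^ (2 * s) :=
        (continuous_const.add continuous_abs).rpow_const fun w => Or.inr (by positivity)
      exact h1.mul (Real.continuous_exp.comp (by fun_prop))
    · have h0 : (0:ℝ) < 1 + |w| := by positivity
      have h1 : (1 + |w|) ^ (2 * s) ≤ Real.exp (2 * s * |w|) := by
        rw [← Real.exp_log h0, ← Real.exp_mul]
        exact Real.exp_le_exp.2 (by
          have := Real.log_le_sub_one_of_pos h0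
          nlinarith [abs_nonneg w, mul_le_mul_of_nonneg_left (show Real.log (1+|w|) ≤ |w| by linarith) (by linarith : (0:ℝ) ≤ 2*s)])
      have h2 : (0:ℝ) ≤ (1 + |w|) ^ (2 * s) := Real.rpow_nonneg h0.le _
      rw [Real.norm_eq_abs, abs_of_nonneg (by positivity)]
      calc (1 + |w|) ^ (2*s) * Real.exp (-(w^2/2))
          ≤ Real.exp (2*s*|w|) * Real.exp (-(w^2/2)) :=
            mul_le_mul_of_nonneg_right h1 (Real.exp_pos _).le
        _ = Real.exp (2*s*|w| - w^2/2) := by rw [← Real.exp_add]; ring_nf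
        _ ≤ Real.exp (4*s^2 + -(1/4) * w^2) := Real.exp_le_exp.2 (by nlinarith [sq_nonneg (|w| - 4*s), sq_abs w])
        _ = Real.exp (4*s^2) * Real.exp (-(1/4) * w^2) := Real.exp_add _ _
  · refine Integrable.mono' integrable_inv_one_add_sq ?_ (ae_of_all _ fun w => ?_)
    · exact Continuous.aestronglyMeasurable (Real.continuous_exp.comp (by fun_prop))
    · rw [Real.norm_eq_abs, abs_of_nonneg (Real.exp_pos _).le]
      have h1 : (1 + w ^ 2 : ℝ) ≤ Real.exp (2 * |w|) := by
        have := Real.add_one_le_exp |w|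
        calc (1 + w^2 : ℝ) ≤ (1 + |w|)^2 := by nlinarith [abs_nonneg w, sq_abs w]
          _ ≤ Real.exp |w| ^ 2 := by nlinarith [abs_nonneg w, Real.exp_pos |w|]
          _ = Real.exp (2 * |w|) := by rw [← Real.exp_nat_mul]; norm_num
      rw [Real.exp_neg]
      exact inv_anti₀ (by positivity) h1

set_option maxHeartbeats 1000000 in
lemma K_tendsto (s w : ℝ) :
    Tendsto (fun σ => K s σ w) atTop (𝓝 (4 ^ s * Real.exp (-(1/2) - w ^ 2))) := by
  have hev : ∀ᶠ σ : ℝ in atTop, 2 + |w| ≤ σ := eventually_ge_atTop _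
  have hbasic : ∀ σ : ℝ, 2 + |w| ≤ σ →
      0 < σ ∧ 0 < σ + w ∧ 0 < (σ + w) / σ ^ 3 ∧ (σ + w) / σ ^ 3 ≤ 1/2 := by
    intro σ hσ
    have h2 : (2:ℝ) ≤ σ := by linarith [abs_nonneg w]
    have h0 : (0:ℝ) < σ := by linarith
    have h1 : 0 < σ + w := by nlinarith [neg_abs_le w]
    have h4σ : 4 * σ ≤ σ ^ 3 := by nlinarith [sq_nonneg σ]
    have hww : w ≤ σ - 2 := by linarith [le_abs_self w]
    refine ⟨h0, h1, by positivity, ?_⟩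
    rw [div_le_iff₀ (by positivity)]
    linarith
  -- basic limits
  have hσ2inv : Tendsto (fun σ : ℝ => (σ ^ 2)⁻¹) atTop (𝓝 0) :=
    (tendsto_pow_atTop two_ne_zero).inv_tendsto_atTop
  have hratio : Tendsto (fun σ : ℝ => (σ + w) / σ) atTop (𝓝 1) := by
    have h : Tendsto (fun σ : ℝ => 1 + w * σ⁻¹) atTop (𝓝 (1 + w * 0)) :=
      tendsto_const_nhds.add (tendsto_const_nhds.mul tendsto_inv_atTop_zero)
    rw [mul_zero, add_zero] at h
    refine h.congr' ?_
    filter_upwards [eventually_gt_atTop 0] with σ hσ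
    field_simp
  have hu : Tendsto (fun σ : ℝ => (σ + w) / σ ^ 3) atTop (𝓝 0) := by
    have h : Tendsto (fun σ : ℝ => ((σ + w) / σ) * (σ ^ 2)⁻¹) atTop (𝓝 (1 * 0)) :=
      hratio.mul hσ2inv
    rw [mul_zero] at h
    refine h.congr' ?_
    filter_upwards [eventually_gt_atTop 0] with σ hσ
    rw [show σ ^ 3 = σ * σ ^ 2 by ring, ← div_div, div_eq_mul_inv]
    rw [div_eq_mul_inv]
  -- remainder term R → 0
  have hR : Tendsto (fun σ : ℝ => σ ^ 4 * (Real.log (1 - (σ + w) / σ ^ 3)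
      + (σ + w) / σ ^ 3 + ((σ + w) / σ ^ 3) ^ 2 / 2)) atTop (𝓝 0) := by
    have h1m : Tendsto (fun σ : ℝ => (1 - (σ + w) / σ ^ 3)) atTop (𝓝 1) := by
      have h : Tendsto (fun σ : ℝ => (1:ℝ) - (σ + w) / σ ^ 3) atTop (𝓝 (1 - 0)) :=
        tendsto_const_nhds.sub hu
      rwa [sub_zero] at h
    have h1minv : Tendsto (fun σ : ℝ => (1 - (σ + w) / σ ^ 3)⁻¹) atTop (𝓝 1) := by
      have := h1m.inv₀ one_ne_zero
      rwa [inv_one] at this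
    have hg : Tendsto (fun σ : ℝ => (((σ + w) / σ) ^ 3 * (σ ^ 2)⁻¹) *
        (1 - (σ + w) / σ ^ 3)⁻¹) atTop (𝓝 (1 ^ 3 * 0 * 1)) :=
      ((hratio.pow 3).mul hσ2inv).mul h1minv
    rw [show ((1:ℝ) ^ 3 * 0 * 1) = 0 by norm_num] at hg
    apply squeeze_zero_norm' _ hg
    filter_upwards [hev] with σ hσ
    obtain ⟨h0, h1, hu0, hu12⟩ := hbasic σ hσ
    set v : ℝ := (σ + w) / σ ^ 3 with hv
    have hvlt : |v| < 1 := by rw [abs_of_pos hu0]; linarith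
    have key := Real.abs_log_sub_add_sum_range_le hvlt 2
    have hsum : (∑ i ∈ Finset.range 2, v ^ (i + 1) / (i + 1)) = v + v ^ 2 / 2 := by
      norm_num [Finset.sum_range_succ]
    rw [hsum] at key
    have habs : |σ ^ 4 * (Real.log (1 - v) + v + v ^ 2 / 2)|
        = σ ^ 4 * |v + v ^ 2 / 2 + Real.log (1 - v)| := by
      rw [abs_mul, abs_of_nonneg (by positivity : (0:ℝ) ≤ σ ^ 4)]
      ring_nf
    rw [Real.norm_eq_abs, habs]
    have h2 : σ ^ 4 * |v + v ^ 2 / 2 + Real.log (1 - v)| ≤ σ ^ 4 * (|v| ^ 3 / (1 - |v|)) :=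
      mul_le_mul_of_nonneg_left key (by positivity)
    refine h2.trans (le_of_eq ?_)
    rw [abs_of_pos hu0]
    have hA : ((σ + w) / σ) ^ 3 * (σ ^ 2)⁻¹ = σ ^ 4 * v ^ 3 := by
      rw [hv]
      field_simp
    rw [hA, div_eq_mul_inv, hv]
    ring
  -- second term → 1/2
  have hT2 : Tendsto (fun σ : ℝ => ((σ + w) / σ) ^ 2 / 2) atTop (𝓝 (1/2)) := by
    have := (hratio.pow 2).div_const 2
    norm_num at this
    exact this
  -- third term → w ^ 2
  have hT3 : Tendsto (fun σ : ℝ => w ^ 2 * (σ / (σ + w))) atTop (𝓝 (w ^ 2)) := by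
    have h1 : Tendsto (fun σ : ℝ => w ^ 2 * ((σ + w) / σ)⁻¹) atTop (𝓝 (w ^ 2 * 1⁻¹)) :=
      tendsto_const_nhds.mul (hratio.inv₀ one_ne_zero)
    rw [inv_one, mul_one] at h1
    refine h1.congr' ?_
    filter_upwards [hev] with σ hσ
    obtain ⟨h0, h1, _, _⟩ := hbasic σ hσ
    rw [inv_div]
  -- the exponent
  have hE : Tendsto (fun σ : ℝ => σ ^ 4 * (Real.log (1 - (σ + w) / σ ^ 3)
      + (σ + w) / σ ^ 3 + ((σ + w) / σ ^ 3) ^ 2 / 2) - ((σ + w) / σ) ^ 2 / 2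
      - w ^ 2 * (σ / (σ + w))) atTop (𝓝 (-(1/2) - w ^ 2)) := by
    have := (hR.sub hT2).sub hT3
    rw [zero_sub] at this
    exact this
  -- the power factor
  have hP : Tendsto (fun σ : ℝ =>
      (((σ + w) / σ ^ 3 * (2 - (σ + w) / σ ^ 3)) ^ 2 * σ ^ 4) ^ s) atTop (𝓝 (4 ^ s)) := by
    have hX : Tendsto (fun σ : ℝ =>
        ((σ + w) / σ ^ 3 * (2 - (σ + w) / σ ^ 3)) ^ 2 * σ ^ 4) atTop (𝓝 4) := by
      have h2u : Tendsto (fun σ : ℝ => (2 - (σ + w) / σ ^ 3) ^ 2) atTop (𝓝 4) := by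
        have h : Tendsto (fun σ : ℝ => (2:ℝ) - (σ + w) / σ ^ 3) atTop (𝓝 (2 - 0)) :=
          tendsto_const_nhds.sub hu
        have := h.pow 2
        norm_num at this
        exact this
      have h := (hratio.pow 2).mul h2u
      rw [one_pow, one_mul] at h
      refine h.congr' ?_
      filter_upwards [eventually_gt_atTop 0] with σ hσ
      have hσ3 : (σ:ℝ) ^ 3 ≠ 0 := by positivity
      field_simp
    exact hX.rpow_const (Or.inl (by norm_num))
  -- combine
  have hfinal : Tendsto (fun σ : ℝ =>
      Real.exp (σ ^ 4 * (Real.log (1 - (σ + w) / σ ^ 3)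
        + (σ + w) / σ ^ 3 + ((σ + w) / σ ^ 3) ^ 2 / 2) - ((σ + w) / σ) ^ 2 / 2
        - w ^ 2 * (σ / (σ + w))) *
      (((σ + w) / σ ^ 3 * (2 - (σ + w) / σ ^ 3)) ^ 2 * σ ^ 4) ^ s) atTop
      (𝓝 (Real.exp (-(1/2) - w ^ 2) * 4 ^ s)) :=
    ((Real.continuous_exp.tendsto _).comp hE).mul hP
  rw [mul_comm] at hfinal
  refine hfinal.congr' ?_
  filter_upwards [hev] with σ hσ
  obtain ⟨h0, h1, hu0, hu12⟩ := hbasic σ hσ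
  have h2 : (2:ℝ) ≤ σ := by linarith [abs_nonneg w]
  have h4σ : 4 * σ ≤ σ ^ 3 := by nlinarith [sq_nonneg σ]
  have hmem : w ∈ Set.Ioo (-σ) (σ ^ 3 - σ) := by
    constructor
    · linarith [neg_abs_le w]
    · linarith [le_abs_self w]
  rw [K, Set.indicator_of_mem hmem]
  have h1u : (0:ℝ) < 1 - (σ + w) / σ ^ 3 := by linarith
  rw [Real.rpow_def_of_pos h1u]
  have hEeq : σ ^ 4 * (Real.log (1 - (σ + w) / σ ^ 3)
        + (σ + w) / σ ^ 3 + ((σ + w) / σ ^ 3) ^ 2 / 2) - ((σ + w) / σ) ^ 2 / 2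
        - w ^ 2 * (σ / (σ + w))
      = Real.log (1 - (σ + w) / σ ^ 3) * σ ^ 4 + (2 * σ ^ 2 - σ ^ 3 / (σ + w)) := by
    have hki := key_ident h0.ne' h1.ne'
    have hq : σ ^ 4 * ((σ + w) / σ ^ 3) ^ 2 / 2 = ((σ + w) / σ) ^ 2 / 2 := by
      field_simp
    have hw2 : w ^ 2 * (σ / (σ + w)) = σ * w ^ 2 / (σ + w) := by
      field_simp
    rw [hw2, ← hki]
    linarith [hq]
  rw [hEeq, Real.exp_add]
  ring

set_option maxHeartbeats 1600000 in
lemma main_eq (s : ℝ) (hs : 0 ≤ s) {t : ℝ} (ht : 0 ≤ t) :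
    (∫ z in {z : ℂ | ‖z‖ < 1},
          ‖z‖ ^ t * (1 - ‖z‖ ^ 2) ^ (2 * s) *
            Real.exp (-1 / (1 - ‖z‖))) /
        ((t + 1) ^ ((-4 * s - 3) / 4) * Real.exp (-2 * Real.sqrt (t + 1)))
      = 2 * π * ∫ w : ℝ, K s ((t + 1) ^ ((1:ℝ)/4)) w := by
  have ht1 : (0:ℝ) < t + 1 := by linarith
  set σ : ℝ := (t + 1) ^ ((1:ℝ)/4) with hσdef
  have hσ0 : 0 < σ := Real.rpow_pos_of_pos ht1 _
  have hσ1 : 1 ≤ σ := by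
    have h := Real.rpow_le_rpow_of_exponent_le (show (1:ℝ) ≤ t + 1 by linarith)
      (show (0:ℝ) ≤ (1:ℝ)/4 by norm_num)
    rwa [Real.rpow_zero] at h
  have hτ : σ ^ (4:ℕ) = t + 1 := by
    rw [hσdef, ← Real.rpow_natCast ((t+1) ^ ((1:ℝ)/4)) 4, ← Real.rpow_mul ht1.le]
    norm_num
  set f : ℝ → ℝ := fun x => x ^ t * (1 - x ^ 2) ^ (2*s) * Real.exp (-1/(1-x)) with hf
  set F1 : ℝ → ℝ := fun y => y * f y with hF1
  set G : ℝ → ℝ := Set.indicator (Set.Ioo 0 1) F1 with hG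
  -- step 1: polar coordinates
  have hset : {z : ℂ | ‖z‖ < 1} = Metric.ball (0:ℂ) 1 := by
    ext z
    simp [Metric.mem_ball, Complex.dist_eq]
  have step1 : (∫ z in {z : ℂ | ‖z‖ < 1},
      ‖z‖ ^ t * (1 - ‖z‖ ^ 2) ^ (2 * s) *
        Real.exp (-1 / (1 - ‖z‖)))
      = ∫ z : ℂ, (Set.indicator (Set.Iio 1) f) ‖z‖ := by
    rw [hset, ← MeasureTheory.integral_indicator measurableSet_ball]
    congr 1
    ext z
    by_cases h : ‖z‖ < 1
    · rw [Set.indicator_of_mem (by simpa [Metric.mem_ball, Complex.dist_eq] using h),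
        Set.indicator_of_mem (by simpa using h)]
    · rw [Set.indicator_of_notMem (by simpa [Metric.mem_ball, Complex.dist_eq] using h),
        Set.indicator_of_notMem (by simpa using h)]
  have hball : (volume (Metric.ball (0:ℂ) 1)).toReal = π := by
    rw [Complex.volume_ball]
    simp
  have step2 : ∫ z : ℂ, (Set.indicator (Set.Iio 1) f) ‖z‖
      = 2 * (π * ∫ y in Set.Ioi (0:ℝ), y ^ (1:ℕ) • (Set.indicator (Set.Iio 1) f) y) := by
    rw [MeasureTheory.integral_fun_norm_addHaar volume (Set.indicator (Set.Iio 1) f)]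
    rw [Complex.finrank_real_complex, measureReal_def, hball]
    norm_num [smul_eq_mul]
  have step3 : (∫ y in Set.Ioi (0:ℝ), y ^ (1:ℕ) • (Set.indicator (Set.Iio 1) f) y)
      = ∫ y : ℝ, G y := by
    have h1 : ∀ y : ℝ, y ^ (1:ℕ) • (Set.indicator (Set.Iio 1) f) y
        = Set.indicator (Set.Iio 1) F1 y := by
      intro y
      simp only [pow_one, smul_eq_mul, Set.indicator_apply, hF1]
      split_ifs <;> simp
    simp_rw [h1]
    rw [MeasureTheory.setIntegral_indicator measurableSet_Iio]
    rw [hG, ← MeasureTheory.integral_indicator (by exact measurableSet_Ioo)]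
    congr 1
  -- step 4 : substitution
  set c : ℝ := (σ ^ 3)⁻¹ with hc
  set d : ℝ := 1 - (σ ^ 2)⁻¹ with hd
  have hc0 : 0 < c := by positivity
  have step4 : ∫ y : ℝ, G y = (σ ^ 3)⁻¹ * ∫ x : ℝ, G (d - c * x) := by
    have h5 : ∫ x : ℝ, G (d - c * x) = σ ^ 3 * ∫ y : ℝ, G y := by
      calc ∫ x : ℝ, G (d - c * x) = ∫ x : ℝ, (fun y => G (y + d)) ((-c) * x) := by
            congr 1; ext x; simp only; ring_nf
        _ = |(-c)⁻¹| • ∫ y : ℝ, G (y + d) :=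
            MeasureTheory.Measure.integral_comp_mul_left (fun y => G (y + d)) (-c)
        _ = σ ^ 3 * ∫ y : ℝ, G (y + d) := by
            rw [smul_eq_mul, abs_inv, abs_neg, abs_of_pos hc0, hc, inv_inv]
        _ = σ ^ 3 * ∫ y : ℝ, G y := by
            rw [MeasureTheory.integral_add_right_eq_self (fun y => G y) d]
    rw [h5]
    field_simp
  -- step 5 : pointwise identification
  have step5 : ∀ x : ℝ, G (d - c * x)
      = ((t+1) ^ s * Real.exp (2 * σ ^ 2))⁻¹ * K s σ x := by
    intro x
    have hdc : d - c * x = 1 - (σ + x) / σ ^ 3 := by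
      rw [hd, hc]
      field_simp
      ring
    by_cases hmem : x ∈ Set.Ioo (-σ) (σ ^ 3 - σ)
    · obtain ⟨hm1, hm2⟩ := hmem
      have hsx : 0 < σ + x := by linarith
      have hu0 : 0 < (σ + x) / σ ^ 3 := by positivity
      have hu1 : (σ + x) / σ ^ 3 < 1 := by
        rw [div_lt_one (by positivity)]; linarith
      have hrmem : d - c * x ∈ Set.Ioo (0:ℝ) 1 := by
        rw [hdc]; constructor <;> [linarith; linarith]
      rw [hG, Set.indicator_of_mem hrmem, K,
        Set.indicator_of_mem (show x ∈ Set.Ioo (-σ) (σ ^ 3 - σ) from ⟨hm1, hm2⟩)]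
      rw [hdc]
      set u : ℝ := (σ + x) / σ ^ 3 with hu
      have hr0 : (0:ℝ) < 1 - u := by linarith
      -- (e1)
      have he1 : (1 - u) ^ ((σ:ℝ) ^ 4) = (1 - u) ^ t * (1 - u) := by
        rw [hτ, Real.rpow_add_one hr0.ne']
      -- (e2)
      have he2 : 1 - (1 - u) ^ 2 = u * (2 - u) := by ring
      -- (e3)
      have he3 : ((u * (2 - u)) ^ 2 * σ ^ 4) ^ s = (u * (2 - u)) ^ (2*s) * (t+1) ^ s := by
        rw [hτ, Real.mul_rpow (sq_nonneg _) ht1.le]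
        congr 1
        rw [← Real.rpow_natCast (u * (2 - u)) 2, ← Real.rpow_mul
          (by nlinarith : (0:ℝ) ≤ u * (2 - u))]
        norm_num [mul_comm]
      -- (e4)
      have he4 : -1 / (1 - (1 - u)) = -(σ ^ 3 / (σ + x)) := by
        rw [show (1 : ℝ) - (1 - u) = u by ring, hu, neg_div, one_div_div]
      simp only [hF1, hf]
      rw [he2, he4, he1, he3,
        show 2 * σ ^ 2 - σ ^ 3 / (σ + x) = 2 * σ ^ 2 + -(σ ^ 3 / (σ + x)) by ring,
        Real.exp_add]
      have hne1 : (t + 1) ^ s ≠ 0 := (Real.rpow_pos_of_pos ht1 s).ne'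
      have hne2 : Real.exp (2 * σ ^ 2) ≠ 0 := (Real.exp_pos _).ne'
      field_simp
    · have hrnotmem : d - c * x ∉ Set.Ioo (0:ℝ) 1 := by
        rw [hdc]
        rintro ⟨hr1, hr2⟩
        apply hmem
        have hb : (0:ℝ) < σ ^ 3 := by positivity
        have hu1 : (σ + x) / σ ^ 3 < 1 := by linarith
        have hu0 : 0 < (σ + x) / σ ^ 3 := by linarith
        have hx2 : σ + x < σ ^ 3 := (div_lt_one hb).mp hu1
        have hx1 : 0 < σ + x := by
          rcases div_pos_iff.mp hu0 with ⟨h1, _⟩ | ⟨_, h2⟩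
          · exact h1
          · linarith
        exact ⟨by linarith, by linarith⟩
      rw [hG, Set.indicator_of_notMem hrnotmem, K, Set.indicator_of_notMem hmem, mul_zero]
  have step6 : ∫ x : ℝ, G (d - c * x)
      = ((t+1) ^ s * Real.exp (2 * σ ^ 2))⁻¹ * ∫ x : ℝ, K s σ x := by
    simp_rw [step5]
    exact MeasureTheory.integral_const_mul _ _
  have hA3 : σ ^ (3:ℕ) = (t+1) ^ ((3:ℝ)/4) := by
    rw [hσdef, ← Real.rpow_natCast ((t+1) ^ ((1:ℝ)/4)) 3, ← Real.rpow_mul ht1.le]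
    norm_num
  have hden1 : (t + 1) ^ ((-4 * s - 3) / 4) = ((t+1) ^ s)⁻¹ * (σ ^ 3)⁻¹ := by
    rw [show (-4 * s - 3) / 4 = (-s) + (-((3:ℝ)/4)) by ring,
      Real.rpow_add ht1, Real.rpow_neg ht1.le, Real.rpow_neg ht1.le, hA3]
  have hden2 : Real.sqrt (t+1) = σ ^ 2 := by
    have hA : σ ^ (2:ℕ) = (t+1) ^ ((1:ℝ)/2) := by
      rw [hσdef, ← Real.rpow_natCast ((t+1) ^ ((1:ℝ)/4)) 2, ← Real.rpow_mul ht1.le]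
      norm_num
    rw [hA, Real.sqrt_eq_rpow]
  rw [step1, step2, step3, step4, step6, hden1, hden2,
    show -2 * σ ^ 2 = -(2 * σ ^ 2) by ring, Real.exp_neg]
  have hne1 : (t + 1) ^ s ≠ 0 := (Real.rpow_pos_of_pos ht1 s).ne'
  have hne2 : Real.exp (2 * σ ^ 2) ≠ 0 := (Real.exp_pos _).ne'
  have hne3 : (σ:ℝ) ^ 3 ≠ 0 := by positivity
  field_simp

end WIA
end WIA

open WIA in
/-- Asymptotics of the weighted integrals `∫_𝔻 |z|^t (1-|z|²)^{2s} e^{-1/(1-|z|)} dA(z)`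
as `t → ∞`. -/
theorem weighted_integral_asymptotics (s : ℝ) (hs : 0 ≤ s) :
    ∃ L : ℝ, 0 < L ∧ Filter.Tendsto (fun t : ℝ =>
      (∫ z in {z : ℂ | ‖z‖ < 1},
          ‖z‖ ^ t * (1 - ‖z‖ ^ 2) ^ (2 * s) *
            Real.exp (-1 / (1 - ‖z‖))) /
        ((t + 1) ^ ((-4 * s - 3) / 4) * Real.exp (-2 * Real.sqrt (t + 1))))
      Filter.atTop (nhds L) := by
  refine ⟨2 * π * (4 ^ s * Real.exp (-(1/2)) * Real.sqrt π), by positivity, ?_⟩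
  have hσt : Tendsto (fun t : ℝ => (t + 1) ^ ((1:ℝ)/4)) atTop atTop :=
    (tendsto_rpow_atTop (by norm_num : (0:ℝ) < 1/4)).comp
      (tendsto_atTop_add_const_right _ 1 tendsto_id)
  have hDCT : Tendsto (fun t : ℝ => ∫ w : ℝ, K s ((t + 1) ^ ((1:ℝ)/4)) w) atTop
      (𝓝 (∫ w : ℝ, 4 ^ s * Real.exp (-(1/2) - w ^ 2))) := by
    apply MeasureTheory.tendsto_integral_filter_of_dominated_convergence (bound s)
    · exact Filter.Eventually.of_forall fun t => K_meas s _
    · filter_upwards [hσt.eventually_ge_atTop (4 * s + 4)] with t htt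
      exact MeasureTheory.ae_of_all _ fun w => K_bound hs htt w
    · exact bound_integrable hs
    · exact MeasureTheory.ae_of_all _ fun w => (K_tendsto s w).comp hσt
  rw [limit_integral s] at hDCT
  have h2 := hDCT.const_mul (2 * π)
  refine h2.congr' ?_
  filter_upwards [eventually_ge_atTop (0:ℝ)] with t ht
  exact (main_eq s hs ht).symm
end

section
/- Let X be a normed space, Y a Banach space, and T : X → Y a bounded linear map. Suppose for every ε > 0 there is C_ε > 0 and a compact linear map K : X → Z (Z a Banach space, K fixed) such that ‖Tx‖ ≤ ε‖x‖_X + C_ε‖Kx‖_Z for all x ∈ X. Then T is compact. -/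
/-- Compactness estimate with a single fixed compact operator implies compactness. -/
theorem compact_of_fixed_compactness_estimate
    {X Y Z : Type*} [NormedAddCommGroup X] [NormedSpace ℝ X]
    [NormedAddCommGroup Y] [NormedSpace ℝ Y] [CompleteSpace Y]
    [NormedAddCommGroup Z] [NormedSpace ℝ Z] [CompleteSpace Z]
    (T : X →L[ℝ] Y) (K : X →L[ℝ] Z) (hK : IsCompactOperator K)
    (h : ∀ ε : ℝ, 0 < ε → ∃ C : ℝ, 0 < C ∧
      ∀ x : X, ‖T x‖ ≤ ε * ‖x‖ + C * ‖K x‖) :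
    IsCompactOperator T := by
  suffices hcl : IsCompact (closure ((T : X → Y) '' Metric.ball 0 1)) by
    exact (isCompactOperator_iff_isCompact_closure_image_ball (𝕜₁ := ℝ)
      (T : X →ₗ[ℝ] Y) one_pos).mpr hcl
  have hKball : TotallyBounded ((K : X → Z) '' Metric.ball 0 1) := by
    have := hK.isCompact_closure_image_ball (𝕜₁ := ℝ) (1 : ℝ)
    exact this.totallyBounded.subset subset_closure
  have hTB : TotallyBounded ((T : X → Y) '' Metric.ball 0 1) := by
    rw [Metric.totallyBounded_iff]
    intro ε hε
    obtain ⟨C, hC, hest⟩ := h (ε / 4) (by linarith)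
    obtain ⟨t, htsub, htfin, hcov⟩ := totallyBounded_iff_subset.mp hKball
      {p : Z × Z | dist p.1 p.2 < ε / (4 * C)}
      (Metric.dist_mem_uniformity (by positivity))
    -- choose preimages
    choose! g hg using fun z (hz : z ∈ (K : X → Z) '' Metric.ball 0 1) => hz
    refine ⟨(fun z => T (g z)) '' t, htfin.image _, ?_⟩
    rintro _ ⟨x, hx, rfl⟩
    obtain ⟨z, hz, hmem⟩ := Set.mem_iUnion₂.mp (hcov ⟨x, hx, rfl⟩)
    obtain ⟨hgball, hgK⟩ := hg z (htsub hz)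
    refine Set.mem_iUnion₂.mpr ⟨T (g z), ⟨z, hz, rfl⟩, ?_⟩
    rw [Metric.mem_ball, dist_eq_norm, ← map_sub]
    calc ‖T (x - g z)‖ ≤ ε / 4 * ‖x - g z‖ + C * ‖K (x - g z)‖ := hest _
      _ < ε := by
        have h1 : ‖x - g z‖ < 2 := by
          calc ‖x - g z‖ ≤ ‖x‖ + ‖g z‖ := norm_sub_le _ _
            _ < 2 := by
              have := mem_ball_zero_iff.mp hx
              have := mem_ball_zero_iff.mp hgball
              linarith
        have h2 : ‖K (x - g z)‖ < ε / (4 * C) := by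
          rw [map_sub, ← dist_eq_norm, hgK]
          exact hmem
        have := mul_lt_mul_of_pos_left h2 hC
        have := mul_lt_mul_of_pos_left h1 (show (0:ℝ) < ε / 4 by linarith)
        have hC' : C * (ε / (4 * C)) = ε / 4 := by field_simp
        nlinarith
  exact TotallyBounded.isCompact_of_isClosed hTB.closure isClosed_closure
end
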